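/- Let H : [0,1] × [0,1] → ℝ, and consider the concatenation-rescaling map 𝒞(u,v,T)(t) = (T+1)·u(t(T+1)) for 0 ≤ t < 1/(T+1) and (T+1)·v((T+1)t − 1) for 1/(T+1) < t ≤ 1. Then 𝒞 : L²([0,1]) × L²([0,∞)) × [0,∞) → L²([0,1]) is jointly continuous, and ‖𝒞(u,v,T)‖²_{L²([0,1])} = (T+1)(‖u‖²_{L²([0,1])} + ‖v|_{[0,T]}‖²_{L²}). -/

import Mathlib

open Filter Topology MeasureTheory

/-- The concatenation–rescaling map `𝒞(u,v,T)` of two controls. -/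
noncomputable def concatRescale (u v : ℝ → ℝ) (T : ℝ) : ℝ → ℝ :=
  fun t => if t < 1 / (T + 1) then (T + 1) * u (t * (T + 1)) else (T + 1) * v ((T + 1) * t - 1)

namespace ConcatAux

open Set MeasureTheory

variable {u v g h : ℝ → ℝ} {T : ℝ}

lemma hTa (hT : 0 ≤ T) : (0:ℝ) < T + 1 := by linarith

lemma s_pos (hT : 0 ≤ T) : 0 < 1 / (T + 1) := one_div_pos.mpr (hTa hT)

lemma s_le_one (hT : 0 ≤ T) : 1 / (T + 1) ≤ 1 := by
  rw [div_le_one (hTa hT)]; linarith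

lemma concat_sub_apply (u u' v v' : ℝ → ℝ) (T t : ℝ) :
    concatRescale (u - u') (v - v') T t
      = concatRescale u v T t - concatRescale u' v' T t := by
  simp only [concatRescale, Pi.sub_apply]
  split <;> ring

lemma abs_concat_le {M : ℝ} (hgM : ∀ x, |u x| ≤ M) (hhM : ∀ x, |v x| ≤ M)
    (hT : 0 ≤ T) (t : ℝ) : |concatRescale u v T t| ≤ (T + 1) * M := by
  have ha := hTa hT
  simp only [concatRescale]
  split
  · rw [abs_mul, abs_of_pos ha]; exact mul_le_mul_of_nonneg_left (hgM _) ha.le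
  · rw [abs_mul, abs_of_pos ha]; exact mul_le_mul_of_nonneg_left (hhM _) ha.le

lemma qmp_mul_right {a : ℝ} (ha : a ≠ 0) :
    Measure.QuasiMeasurePreserving (fun t : ℝ => t * a) volume volume :=
  ⟨measurable_mul_const a, by
    rw [Real.map_volume_mul_right ha]
    exact Measure.AbsolutelyContinuous.rfl.smul_left _⟩

lemma qmp_affine {a : ℝ} (ha : a ≠ 0) (b : ℝ) :
    Measure.QuasiMeasurePreserving (fun t : ℝ => a * t - b) volume volume := by
  have hcomp : (fun t : ℝ => a * t - b) = (fun x : ℝ => x - b) ∘ fun t : ℝ => t * a := by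
    funext t; simp [Function.comp, mul_comm]
  rw [hcomp]
  exact (measurePreserving_sub_right volume b).quasiMeasurePreserving.comp (qmp_mul_right ha)

lemma concat_aesm (hT : 0 ≤ T)
    (hu : AEStronglyMeasurable u volume) (hv : AEStronglyMeasurable v volume) :
    AEStronglyMeasurable (concatRescale u v T) volume := by
  have ha : (T + 1) ≠ 0 := (hTa hT).ne'
  have hA : AEStronglyMeasurable (fun t : ℝ => (T + 1) * u (t * (T + 1))) volume :=
    (hu.comp_quasiMeasurePreserving (qmp_mul_right ha)).const_mul _
  have hB : AEStronglyMeasurable (fun t : ℝ => (T + 1) * v ((T + 1) * t - 1)) volume :=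
    (hv.comp_quasiMeasurePreserving (qmp_affine ha 1)).const_mul _
  have hrw : concatRescale u v T = fun t =>
      (Set.Iio (1 / (T + 1))).indicator (fun t => (T + 1) * u (t * (T + 1))) t
        + (Set.Iio (1 / (T + 1)))ᶜ.indicator (fun t => (T + 1) * v ((T + 1) * t - 1)) t := by
    funext t
    simp only [concatRescale, Set.indicator_apply, Set.mem_Iio, Set.mem_compl_iff, not_lt]
    split_ifs with h1 h2 <;> first | linarith | ring
  rw [hrw]
  exact (hA.indicator measurableSet_Iio).add (hB.indicator measurableSet_Iio.compl)

lemma intervalIntegrable_congr_uIoc {f g : ℝ → ℝ} {a b : ℝ}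
    (hf : IntervalIntegrable f volume a b)
    (hfg : f =ᵐ[volume.restrict (Set.uIoc a b)] g) :
    IntervalIntegrable g volume a b := by
  rw [intervalIntegrable_iff] at hf ⊢
  exact hf.congr hfg

lemma ae_ne (c : ℝ) : ∀ᵐ t : ℝ ∂volume, t ≠ c := by
  have hs : {t : ℝ | ¬ t ≠ c} = {c} := by ext t; simp
  rw [ae_iff, hs]; exact measure_singleton c

lemma concat_left_eq_ae (hT : 0 ≤ T) (u v : ℝ → ℝ) :
    ∀ᵐ t ∂(volume : Measure ℝ), t ∈ Set.uIoc (0:ℝ) (1/(T+1)) →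
      concatRescale u v T t = (T+1) * u (t * (T+1)) := by
  filter_upwards [ae_ne (1/(T+1))] with t ht hmem
  rw [Set.uIoc_of_le (s_pos hT).le] at hmem
  have hlt : t < 1/(T+1) := lt_of_le_of_ne hmem.2 ht
  simp only [concatRescale]
  rw [if_pos hlt]

lemma concat_right_eq (hT : 0 ≤ T) (u v : ℝ → ℝ) {t : ℝ}
    (hmem : t ∈ Set.uIcc (1/(T+1)) 1) :
    concatRescale u v T t = (T+1) * v ((T+1) * t - 1) := by
  rw [Set.uIcc_of_le (s_le_one hT)] at hmem
  simp only [concatRescale]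
  rw [if_neg (not_lt.mpr hmem.1)]

lemma sq_integrable (hu : MemLp u 2 (volume : Measure ℝ)) :
    Integrable (fun x => u x ^ 2) volume :=
  (memLp_two_iff_integrable_sq hu.aestronglyMeasurable).mp hu

lemma concat_sq_II_left (hT : 0 ≤ T) (hu : MemLp u 2 (volume : Measure ℝ)) (v : ℝ → ℝ) :
    IntervalIntegrable (fun t => (concatRescale u v T t)^2) volume 0 (1/(T+1)) := by
  have h1 : IntervalIntegrable (fun x => u x ^ 2) volume 0 1 :=
    (sq_integrable hu).intervalIntegrable
  have h2 := h1.comp_mul_right (c := T+1)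
  have h2' : IntervalIntegrable (fun x => u (x * (T+1)) ^ 2) volume 0 (1/(T+1)) := by
    simpa using h2
  have h3 := h2'.const_mul ((T+1)^2)
  refine intervalIntegrable_congr_uIoc h3 ?_
  refine (ae_restrict_iff' measurableSet_uIoc).mpr ?_
  filter_upwards [concat_left_eq_ae hT u v] with t hteq htmem
  simp only [hteq htmem]; ring

lemma concat_sq_II_right (hT : 0 ≤ T) (u : ℝ → ℝ) (hv : MemLp v 2 (volume : Measure ℝ)) :
    IntervalIntegrable (fun t => (concatRescale u v T t)^2) volume (1/(T+1)) 1 := by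
  have ha : (T+1) ≠ 0 := (hTa hT).ne'
  have h1 : IntervalIntegrable (fun x => v x ^ 2) volume 0 T :=
    (sq_integrable hv).intervalIntegrable
  have h2 := h1.comp_sub_right 1
  have h3 := h2.comp_mul_left (c := T+1)
  have h3' : IntervalIntegrable (fun x => (v ((T+1) * x - 1))^2) volume (1/(T+1)) 1 := by
    have e1 : (0+1:ℝ)/(T+1) = 1/(T+1) := by norm_num
    have e2 : (T+1)/(T+1) = (1:ℝ) := div_self ha
    rw [e1, e2] at h3
    exact h3
  have h4 := h3'.const_mul ((T+1)^2)
  refine intervalIntegrable_congr_uIoc h4 ?_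
  refine (ae_restrict_iff' measurableSet_uIoc).mpr (ae_of_all _ fun t ht => ?_)
  simp only [concat_right_eq hT u v (Set.uIoc_subset_uIcc ht)]
  ring

lemma concat_norm_sq (hT : 0 ≤ T) (hu : MemLp u 2 (volume : Measure ℝ))
    (hv : MemLp v 2 (volume : Measure ℝ)) :
    ∫ t in (0:ℝ)..1, (concatRescale u v T t)^2
      = (T+1) * ((∫ t in (0:ℝ)..1, u t ^ 2) + ∫ t in (0:ℝ)..T, v t ^ 2) := by
  have ha : (0:ℝ) < T + 1 := hTa hT
  have hsplit := intervalIntegral.integral_add_adjacent_intervals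
    (concat_sq_II_left hT hu v) (concat_sq_II_right hT u hv)
  rw [← hsplit]
  have eL : ∫ t in (0:ℝ)..(1/(T+1)), (concatRescale u v T t)^2
      = (T+1) * ∫ t in (0:ℝ)..1, u t ^ 2 := by
    have e1 : ∫ t in (0:ℝ)..(1/(T+1)), (concatRescale u v T t)^2
        = ∫ t in (0:ℝ)..(1/(T+1)), (T+1)^2 * (fun x => u x ^ 2) (t * (T+1)) := by
      refine intervalIntegral.integral_congr_ae ?_
      filter_upwards [concat_left_eq_ae hT u v] with t h1 h2
      rw [h1 h2]; ring
    rw [e1, intervalIntegral.integral_const_mul,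
      intervalIntegral.integral_comp_mul_right (fun x => u x ^ 2) ha.ne']
    simp only [zero_mul, smul_eq_mul, one_div, inv_mul_cancel₀ ha.ne']
    field_simp
  have eR : ∫ t in (1/(T+1))..1, (concatRescale u v T t)^2
      = (T+1) * ∫ t in (0:ℝ)..T, v t ^ 2 := by
    have e1 : ∫ t in (1/(T+1))..1, (concatRescale u v T t)^2
        = ∫ t in (1/(T+1))..1, (T+1)^2 * (fun x => v x ^ 2) ((T+1) * t - 1) := by
      refine intervalIntegral.integral_congr fun t ht => ?_
      rw [concat_right_eq hT u v ht]; ring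
    rw [e1, intervalIntegral.integral_const_mul,
      intervalIntegral.integral_comp_mul_sub (fun x => v x ^ 2) ha.ne' 1]
    have b1 : (T+1) * (1/(T+1)) - 1 = 0 := by field_simp; ring
    have b2 : (T+1) * 1 - 1 = T := by ring
    rw [b1, b2]
    simp only [smul_eq_mul]
    field_simp
  rw [eL, eR]; ring

lemma concat_memℒp (hT : 0 ≤ T) (hu : MemLp u 2 (volume : Measure ℝ))
    (hv : MemLp v 2 (volume : Measure ℝ)) :
    MemLp (concatRescale u v T) 2 (volume.restrict (Set.Ioc (0:ℝ) 1)) := by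
  have hm := (concat_aesm hT hu.aestronglyMeasurable hv.aestronglyMeasurable).restrict
    (s := Set.Ioc (0:ℝ) 1)
  rw [memLp_two_iff_integrable_sq hm]
  have h1 : IntegrableOn (fun t => (concatRescale u v T t)^2) (Set.Ioc 0 (1/(T+1))) volume :=
    (concat_sq_II_left hT hu v).1
  have h2 : IntegrableOn (fun t => (concatRescale u v T t)^2) (Set.Ioc (1/(T+1)) 1) volume :=
    (concat_sq_II_right hT u hv).1
  have hun : Set.Ioc (0:ℝ) (1/(T+1)) ∪ Set.Ioc (1/(T+1)) 1 = Set.Ioc 0 1 :=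
    Set.Ioc_union_Ioc_eq_Ioc (s_pos hT).le (s_le_one hT)
  have h3 := h1.union h2
  rw [hun] at h3
  exact h3

lemma toReal_eLpNorm_two {f : ℝ → ℝ} {μ : Measure ℝ} (hf : MemLp f 2 μ) :
    ((eLpNorm f 2 μ).toReal)^2 = ∫ x, f x ^ 2 ∂μ := by
  have h := hf.eLpNorm_eq_integral_rpow_norm two_ne_zero ENNReal.ofNat_ne_top
  have h2 : ENNReal.toReal 2 = (2:ℝ) := by simp
  rw [h2] at h
  have hconv : (fun a : ℝ => ‖f a‖ ^ (2:ℝ)) = fun a => f a ^ 2 := by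
    funext a
    rw [show ((2:ℝ)) = ((2:ℕ):ℝ) by norm_num, Real.rpow_natCast, Real.norm_eq_abs, sq_abs]
  rw [hconv] at h
  have hint : (0:ℝ) ≤ ∫ a, f a ^ 2 ∂μ := integral_nonneg fun a => sq_nonneg _
  rw [h, ENNReal.toReal_ofReal (Real.rpow_nonneg hint _)]
  rw [← Real.rpow_natCast ((∫ a, f a ^ 2 ∂μ) ^ (2:ℝ)⁻¹) 2, ← Real.rpow_mul hint]
  rw [show (2:ℝ)⁻¹ * ((2:ℕ):ℝ) = 1 by norm_num, Real.rpow_one]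

lemma toReal_eLpNorm_add_le {f g : ℝ → ℝ} {μ : Measure ℝ}
    (hf : MemLp f 2 μ) (hg : MemLp g 2 μ) :
    (eLpNorm (f + g) 2 μ).toReal ≤ (eLpNorm f 2 μ).toReal + (eLpNorm g 2 μ).toReal := by
  rw [← ENNReal.toReal_add hf.2.ne hg.2.ne]
  exact ENNReal.toReal_mono (ENNReal.add_ne_top.2 ⟨hf.2.ne, hg.2.ne⟩)
    (eLpNorm_add_le hf.1 hg.1 one_le_two)

lemma concat_sq_le (hT : 0 ≤ T) (hu : MemLp u 2 (volume : Measure ℝ))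
    (hv : MemLp v 2 (volume : Measure ℝ)) :
    ((eLpNorm (concatRescale u v T) 2 (volume.restrict (Set.Ioc (0:ℝ) 1))).toReal)^2
      ≤ (T+1) * (((eLpNorm u 2 (volume : Measure ℝ)).toReal)^2
          + ((eLpNorm v 2 (volume : Measure ℝ)).toReal)^2) := by
  rw [toReal_eLpNorm_two (concat_memℒp hT hu hv)]
  have e1 : ∫ x, concatRescale u v T x ^ 2 ∂(volume.restrict (Set.Ioc (0:ℝ) 1))
      = ∫ t in (0:ℝ)..1, (concatRescale u v T t)^2 :=
    (intervalIntegral.integral_of_le zero_le_one).symm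
  rw [e1, concat_norm_sq hT hu hv]
  have hub : ∫ t in (0:ℝ)..1, u t ^ 2 ≤ ((eLpNorm u 2 (volume : Measure ℝ)).toReal)^2 := by
    rw [toReal_eLpNorm_two hu, intervalIntegral.integral_of_le zero_le_one]
    exact setIntegral_le_integral (sq_integrable hu) (ae_of_all _ fun x => sq_nonneg _)
  have hvb : ∫ t in (0:ℝ)..T, v t ^ 2 ≤ ((eLpNorm v 2 (volume : Measure ℝ)).toReal)^2 := by
    rw [toReal_eLpNorm_two hv, intervalIntegral.integral_of_le hT]
    exact setIntegral_le_integral (sq_integrable hv) (ae_of_all _ fun x => sq_nonneg _)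
  have := add_le_add hub hvb
  nlinarith [hTa hT]

lemma concat_toReal_le (hT : 0 ≤ T) (hu : MemLp u 2 (volume : Measure ℝ))
    (hv : MemLp v 2 (volume : Measure ℝ)) :
    (eLpNorm (concatRescale u v T) 2 (volume.restrict (Set.Ioc (0:ℝ) 1))).toReal
      ≤ Real.sqrt ((T+1) * (((eLpNorm u 2 (volume : Measure ℝ)).toReal)^2
          + ((eLpNorm v 2 (volume : Measure ℝ)).toReal)^2)) :=
  Real.le_sqrt_of_sq_le (concat_sq_le hT hu hv)

lemma concat_cont_measurable {S : ℝ} (hg : Continuous g) (hh : Continuous h) :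
    Measurable (concatRescale g h S) := by
  refine Measurable.ite measurableSet_Iio ?_ ?_
  · exact (continuous_const.mul (hg.comp (continuous_id.mul continuous_const))).measurable
  · exact (continuous_const.mul
      (hh.comp ((continuous_const.mul continuous_id).sub continuous_const))).measurable

lemma concat_tendsto_pointwise (hg : Continuous g) (hh : Continuous h) (hT : 0 ≤ T)
    {TN : ℕ → ℝ} (hTN : ∀ m, 0 ≤ TN m) (hlim : Tendsto TN atTop (𝓝 T)) {t : ℝ}
    (ht : t ≠ 1/(T+1)) :
    Tendsto (fun m => concatRescale g h (TN m) t) atTop (𝓝 (concatRescale g h T t)) := by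
  have ha : (0:ℝ) < T + 1 := hTa hT
  have hS : Tendsto (fun m => 1/(TN m + 1)) atTop (𝓝 (1/(T+1))) := by
    simp only [one_div]
    exact ((hlim.add_const 1).inv₀ ha.ne')
  rcases lt_or_gt_of_ne ht with hlt | hgt
  · have hev : ∀ᶠ m in atTop, t < 1/(TN m + 1) := hS.eventually (eventually_gt_nhds hlt)
    have hcont : Tendsto (fun m => (TN m + 1) * g (t * (TN m + 1))) atTop
        (𝓝 ((T+1) * g (t * (T+1)))) := by
      have hc : Continuous fun S : ℝ => (S + 1) * g (t * (S + 1)) :=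
        (continuous_id.add continuous_const).mul
          (hg.comp (continuous_const.mul (continuous_id.add continuous_const)))
      exact (hc.tendsto T).comp hlim
    have heq : concatRescale g h T t = (T+1) * g (t * (T+1)) := by
      simp only [concatRescale]; rw [if_pos hlt]
    rw [heq]
    refine hcont.congr' ?_
    filter_upwards [hev] with m hm
    simp only [concatRescale]; rw [if_pos hm]
  · have hev : ∀ᶠ m in atTop, 1/(TN m + 1) < t := hS.eventually (eventually_lt_nhds hgt)
    have hcont : Tendsto (fun m => (TN m + 1) * h ((TN m + 1) * t - 1)) atTop
        (𝓝 ((T+1) * h ((T+1) * t - 1))) := by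
      have hc : Continuous fun S : ℝ => (S + 1) * h ((S + 1) * t - 1) :=
        (continuous_id.add continuous_const).mul
          (hh.comp (((continuous_id.add continuous_const).mul continuous_const).sub
            continuous_const))
      exact (hc.tendsto T).comp hlim
    have heq : concatRescale g h T t = (T+1) * h ((T+1) * t - 1) := by
      simp only [concatRescale]; rw [if_neg (not_lt.mpr hgt.le)]
    rw [heq]
    refine hcont.congr' ?_
    filter_upwards [hev] with m hm
    simp only [concatRescale]; rw [if_neg (not_lt.mpr hm.le)]

lemma concat_dilation_integral_tendsto (hg : Continuous g) (hgc : HasCompactSupport g)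
    (hh : Continuous h) (hhc : HasCompactSupport h) (hT : 0 ≤ T)
    {TN : ℕ → ℝ} (hTN : ∀ m, 0 ≤ TN m) (hlim : Tendsto TN atTop (𝓝 T)) :
    Tendsto (fun m => ∫ t in Set.Ioc (0:ℝ) 1,
      (concatRescale g h (TN m) t - concatRescale g h T t)^2) atTop (𝓝 0) := by
  obtain ⟨Mg, hMg⟩ := hgc.exists_bound_of_continuous hg
  obtain ⟨Mh, hMh⟩ := hhc.exists_bound_of_continuous hh
  set M : ℝ := max Mg Mh with hM
  have hgM : ∀ x, |g x| ≤ M := fun x => le_trans (hMg x) (le_max_left _ _)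
  have hhM : ∀ x, |h x| ≤ M := fun x => le_trans (hMh x) (le_max_right _ _)
  have hM0 : 0 ≤ M := le_trans (abs_nonneg (g 0)) (hgM 0)
  haveI : IsFiniteMeasure (volume.restrict (Set.Ioc (0:ℝ) 1)) :=
    ⟨by rw [Measure.restrict_apply_univ]; exact measure_Ioc_lt_top⟩
  have hmain := tendsto_integral_filter_of_dominated_convergence
    (μ := volume.restrict (Set.Ioc (0:ℝ) 1)) (l := atTop)
    (F := fun m t => (concatRescale g h (TN m) t - concatRescale g h T t)^2)
    (f := fun _ => (0:ℝ)) (fun _ => (2*(T+2)*M)^2)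
    ?_ ?_ (integrable_const _) ?_
  · simpa using hmain
  · refine Eventually.of_forall fun m => ?_
    exact (((concat_cont_measurable hg hh).sub
      (concat_cont_measurable hg hh)).pow_const 2).aestronglyMeasurable
  · have hevT : ∀ᶠ m in atTop, TN m ≤ T + 1 :=
      hlim.eventually (eventually_le_nhds (by linarith))
    filter_upwards [hevT] with m hm
    refine ae_of_all _ fun t => ?_
    have h1 := abs_concat_le hgM hhM (hTN m) t
    have h2 := abs_concat_le hgM hhM hT t
    have habs : |concatRescale g h (TN m) t - concatRescale g h T t|
        ≤ 2*(T+2)*M := by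
      have htr : |concatRescale g h (TN m) t - concatRescale g h T t|
          ≤ |concatRescale g h (TN m) t| + |concatRescale g h T t| := by
        simpa [sub_eq_add_neg, abs_neg] using
          abs_add_le (concatRescale g h (TN m) t) (-(concatRescale g h T t))
      nlinarith
    have : ‖(concatRescale g h (TN m) t - concatRescale g h T t)^2‖
        ≤ (2*(T+2)*M)^2 := by
      rw [Real.norm_eq_abs, abs_pow, ← sq_abs]
      exact pow_le_pow_left₀ (abs_nonneg _) (by simpa [abs_abs] using habs) 2
    exact this
  · refine ae_restrict_of_ae ?_
    filter_upwards [ae_ne (1/(T+1))] with t ht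
    have hptw := concat_tendsto_pointwise hg hh hT hTN hlim ht
    have hsub := hptw.sub (tendsto_const_nhds (x := concatRescale g h T t))
    have hp2 := hsub.pow 2
    simpa using hp2

lemma concat_dilation_toReal_tendsto (hu : MemLp u 2 (volume : Measure ℝ))
    (hv : MemLp v 2 (volume : Measure ℝ)) (hT : 0 ≤ T)
    {TN : ℕ → ℝ} (hTN : ∀ m, 0 ≤ TN m) (hlim : Tendsto TN atTop (𝓝 T)) :
    Tendsto (fun m => (eLpNorm (concatRescale u v (TN m) - concatRescale u v T) 2
      (volume.restrict (Set.Ioc (0:ℝ) 1))).toReal) atTop (𝓝 0) := by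
  rw [Metric.tendsto_atTop]
  intro ε hε
  have hε3 : 0 < ε/3 := by linarith
  set δ2 : ℝ := (ε/3)^2 / (2*(T+2) + 1) with hδ2def
  have hδ2pos : 0 < δ2 := by positivity
  set δr : ℝ := Real.sqrt δ2 with hδrdef
  have hδrpos : 0 < δr := Real.sqrt_pos.mpr hδ2pos
  have hδ2eq : δ2 * (2*(T+2) + 1) = (ε/3)^2 := by
    rw [hδ2def]; field_simp
  obtain ⟨g, hgc, hge, hg, hgm⟩ := hu.exists_hasCompactSupport_eLpNorm_sub_le
    ENNReal.ofNat_ne_top (ε := ENNReal.ofReal δr) (ENNReal.ofReal_pos.mpr hδrpos).ne'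
  obtain ⟨h, hhc, hhe, hh, hhm⟩ := hv.exists_hasCompactSupport_eLpNorm_sub_le
    ENNReal.ofNat_ne_top (ε := ENNReal.ofReal δr) (ENNReal.ofReal_pos.mpr hδrpos).ne'
  have haG : (eLpNorm (u - g) 2 (volume : Measure ℝ)).toReal ≤ δr :=
    ENNReal.toReal_le_of_le_ofReal hδrpos.le hge
  have hbG : (eLpNorm (v - h) 2 (volume : Measure ℝ)).toReal ≤ δr :=
    ENNReal.toReal_le_of_le_ofReal hδrpos.le hhe
  have ha2 : ((eLpNorm (u - g) 2 (volume : Measure ℝ)).toReal)^2 ≤ δ2 := by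
    have hp := pow_le_pow_left₀ ENNReal.toReal_nonneg haG 2
    rwa [hδrdef, Real.sq_sqrt hδ2pos.le] at hp
  have hb2 : ((eLpNorm (v - h) 2 (volume : Measure ℝ)).toReal)^2 ≤ δ2 := by
    have hp := pow_le_pow_left₀ ENNReal.toReal_nonneg hbG 2
    rwa [hδrdef, Real.sq_sqrt hδ2pos.le] at hp
  have hmemP1 : ∀ m, MemLp (concatRescale (u - g) (v - h) (TN m)) 2
      (volume.restrict (Set.Ioc (0:ℝ) 1)) :=
    fun m => concat_memℒp (hTN m) (hu.sub hgm) (hv.sub hhm)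
  have hmemP3 : MemLp (concatRescale (u - g) (v - h) T) 2
      (volume.restrict (Set.Ioc (0:ℝ) 1)) := concat_memℒp hT (hu.sub hgm) (hv.sub hhm)
  have hmemP2 : ∀ m, MemLp (concatRescale g h (TN m) - concatRescale g h T) 2
      (volume.restrict (Set.Ioc (0:ℝ) 1)) :=
    fun m => (concat_memℒp (hTN m) hgm hhm).sub (concat_memℒp hT hgm hhm)
  have hdecomp : ∀ m, (concatRescale u v (TN m) - concatRescale u v T)
      = (concatRescale (u-g) (v-h) (TN m)
          + (concatRescale g h (TN m) - concatRescale g h T))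
        + (- concatRescale (u-g) (v-h) T) := by
    intro m; funext t
    have e1 := concat_sub_apply u g v h (TN m) t
    have e2 := concat_sub_apply u g v h T t
    simp only [Pi.add_apply, Pi.sub_apply, Pi.neg_apply] at *
    linarith
  have htri : ∀ m, (eLpNorm (concatRescale u v (TN m) - concatRescale u v T) 2
      (volume.restrict (Set.Ioc (0:ℝ) 1))).toReal
      ≤ (eLpNorm (concatRescale (u-g) (v-h) (TN m)) 2
          (volume.restrict (Set.Ioc (0:ℝ) 1))).toReal
        + (eLpNorm (concatRescale g h (TN m) - concatRescale g h T) 2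
            (volume.restrict (Set.Ioc (0:ℝ) 1))).toReal
        + (eLpNorm (concatRescale (u-g) (v-h) T) 2
            (volume.restrict (Set.Ioc (0:ℝ) 1))).toReal := by
    intro m
    rw [hdecomp m]
    have t1 := toReal_eLpNorm_add_le ((hmemP1 m).add (hmemP2 m)) hmemP3.neg
    have t2 := toReal_eLpNorm_add_le (hmemP1 m) (hmemP2 m)
    rw [eLpNorm_neg] at t1
    linarith
  have hP3 : (eLpNorm (concatRescale (u-g) (v-h) T) 2
      (volume.restrict (Set.Ioc (0:ℝ) 1))).toReal < ε/3 := by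
    refine lt_of_le_of_lt (concat_toReal_le hT (hu.sub hgm) (hv.sub hhm)) ?_
    rw [Real.sqrt_lt' hε3]
    nlinarith
  have hevT : ∀ᶠ m in atTop, TN m ≤ T + 1 :=
    hlim.eventually (eventually_le_nhds (by linarith))
  have hP1 : ∀ᶠ m in atTop, (eLpNorm (concatRescale (u-g) (v-h) (TN m)) 2
      (volume.restrict (Set.Ioc (0:ℝ) 1))).toReal < ε/3 := by
    filter_upwards [hevT] with m hm
    refine lt_of_le_of_lt (concat_toReal_le (hTN m) (hu.sub hgm) (hv.sub hhm)) ?_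
    rw [Real.sqrt_lt' hε3]
    nlinarith
  have hDC := concat_dilation_integral_tendsto hg hgc hh hhc hT hTN hlim
  have hY2 : Tendsto (fun m => (eLpNorm (concatRescale g h (TN m) - concatRescale g h T) 2
      (volume.restrict (Set.Ioc (0:ℝ) 1))).toReal) atTop (𝓝 0) := by
    have heq : ∀ m, (eLpNorm (concatRescale g h (TN m) - concatRescale g h T) 2
        (volume.restrict (Set.Ioc (0:ℝ) 1))).toReal
        = Real.sqrt (∫ t in Set.Ioc (0:ℝ) 1,
            (concatRescale g h (TN m) t - concatRescale g h T t)^2) := by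
      intro m
      have e := toReal_eLpNorm_two (hmemP2 m)
      simp only [Pi.sub_apply] at e
      rw [← e, Real.sqrt_sq ENNReal.toReal_nonneg]
    have hs := hDC.sqrt
    rw [Real.sqrt_zero] at hs
    exact hs.congr fun m => (heq m).symm
  have hP2 : ∀ᶠ m in atTop, (eLpNorm (concatRescale g h (TN m) - concatRescale g h T) 2
      (volume.restrict (Set.Ioc (0:ℝ) 1))).toReal < ε/3 :=
    hY2.eventually (eventually_lt_nhds hε3)
  have hfin : ∀ᶠ m in atTop, dist ((eLpNorm (concatRescale u v (TN m) - concatRescale u v T) 2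
      (volume.restrict (Set.Ioc (0:ℝ) 1))).toReal) 0 < ε := by
    filter_upwards [hP1, hP2] with m h1 h2
    have h3 := htri m
    rw [Real.dist_eq, sub_zero, abs_of_nonneg ENNReal.toReal_nonneg]
    linarith
  exact eventually_atTop.mp hfin

lemma concat_indicator_eq (hT : 0 ≤ T) {t : ℝ} (ht : t ∈ Set.Icc (0:ℝ) 1) :
    concatRescale (Set.indicator (Set.Icc (0:ℝ) 1) u) (Set.indicator (Set.Ici (0:ℝ)) v) T t
      = concatRescale u v T t := by
  have ha : (0:ℝ) < T + 1 := hTa hT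
  simp only [concatRescale]
  by_cases hlt : t < 1/(T+1)
  · rw [if_pos hlt, if_pos hlt]
    congr 1
    refine Set.indicator_of_mem ?_ u
    refine ⟨mul_nonneg ht.1 ha.le, ?_⟩
    have h1 : t * (T+1) < 1 := (lt_div_iff₀ ha).mp hlt
    linarith
  · rw [if_neg hlt, if_neg hlt]
    congr 1
    refine Set.indicator_of_mem ?_ v
    have hge : 1/(T+1) ≤ t := not_lt.mp hlt
    have h1 : 1 ≤ t * (T+1) := (div_le_iff₀ ha).mp hge
    show (0:ℝ) ≤ (T+1) * t - 1
    nlinarith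

end ConcatAux

open ConcatAux

/-- The concatenation–rescaling map
`𝒞 : L²([0,1]) × L²([0,∞)) × [0,∞) → L²([0,1])` satisfies the norm identity
`‖𝒞(u,v,T)‖² = (T+1)(‖u‖² + ‖v|_{[0,T]}‖²)` and is jointly (sequentially) continuous. -/
theorem concatRescale_norm_and_continuous
    (u v : ℝ → ℝ) (T : ℝ) (hT : 0 ≤ T)
    (hu : MemLp u 2 (volume.restrict (Set.Icc (0:ℝ) 1)))
    (hv : MemLp v 2 (volume.restrict (Set.Ici (0:ℝ)))) :
    ((∫ t in (0:ℝ)..1, (concatRescale u v T t) ^ 2) =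
      (T + 1) * ((∫ t in (0:ℝ)..1, (u t) ^ 2) + ∫ t in (0:ℝ)..T, (v t) ^ 2)) ∧
    ∀ (uN vN : ℕ → ℝ → ℝ) (TN : ℕ → ℝ),
      (∀ m, 0 ≤ TN m) →
      (∀ m, MemLp (uN m) 2 (volume.restrict (Set.Icc (0:ℝ) 1))) →
      (∀ m, MemLp (vN m) 2 (volume.restrict (Set.Ici (0:ℝ)))) →
      Tendsto (fun m => ∫ t in (0:ℝ)..1, (uN m t - u t) ^ 2) atTop (𝓝 0) →
      Tendsto (fun m => ∫ t in Set.Ici (0:ℝ), (vN m t - v t) ^ 2) atTop (𝓝 0) →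
      Tendsto TN atTop (𝓝 T) →
      Tendsto (fun m => ∫ t in (0:ℝ)..1,
        (concatRescale (uN m) (vN m) (TN m) t - concatRescale u v T t) ^ 2) atTop (𝓝 0) := by
  have hub : MemLp (Set.indicator (Set.Icc (0:ℝ) 1) u) 2 volume :=
    (memLp_indicator_iff_restrict measurableSet_Icc).mpr hu
  have hvb : MemLp (Set.indicator (Set.Ici (0:ℝ)) v) 2 volume :=
    (memLp_indicator_iff_restrict measurableSet_Ici).mpr hv
  constructor
  · have e0 : ∫ t in (0:ℝ)..1, (concatRescale u v T t)^2
        = ∫ t in (0:ℝ)..1,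
            (concatRescale (Set.indicator (Set.Icc (0:ℝ) 1) u)
              (Set.indicator (Set.Ici (0:ℝ)) v) T t)^2 := by
      refine intervalIntegral.integral_congr fun t ht => ?_
      rw [Set.uIcc_of_le zero_le_one] at ht
      simp only [concat_indicator_eq hT ht]
    have e1 : ∫ t in (0:ℝ)..1, u t^2
        = ∫ t in (0:ℝ)..1, (Set.indicator (Set.Icc (0:ℝ) 1) u) t^2 := by
      refine intervalIntegral.integral_congr fun t ht => ?_
      rw [Set.uIcc_of_le zero_le_one] at ht
      simp only [Set.indicator_of_mem ht]
    have e2 : ∫ t in (0:ℝ)..T, v t^2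
        = ∫ t in (0:ℝ)..T, (Set.indicator (Set.Ici (0:ℝ)) v) t^2 := by
      refine intervalIntegral.integral_congr fun t ht => ?_
      rw [Set.uIcc_of_le hT] at ht
      simp only [Set.indicator_of_mem (Set.mem_Ici.mpr ht.1)]
    rw [e0, e1, e2]
    exact concat_norm_sq hT hub hvb
  · intro uN vN TN hTN0 huN hvN hAu hAv hTlim
    have hubNm : ∀ m, MemLp (Set.indicator (Set.Icc (0:ℝ) 1) (uN m)) 2 volume :=
      fun m => (memLp_indicator_iff_restrict measurableSet_Icc).mpr (huN m)
    have hvbNm : ∀ m, MemLp (Set.indicator (Set.Ici (0:ℝ)) (vN m)) 2 volume :=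
      fun m => (memLp_indicator_iff_restrict measurableSet_Ici).mpr (hvN m)
    -- rewrite the goal via the L² norm of differences of indicator versions
    have hgoal_eq : ∀ m, ∫ t in (0:ℝ)..1,
        (concatRescale (uN m) (vN m) (TN m) t - concatRescale u v T t)^2
        = ((eLpNorm (concatRescale (Set.indicator (Set.Icc (0:ℝ) 1) (uN m))
              (Set.indicator (Set.Ici (0:ℝ)) (vN m)) (TN m)
            - concatRescale (Set.indicator (Set.Icc (0:ℝ) 1) u)
              (Set.indicator (Set.Ici (0:ℝ)) v) T) 2
            (volume.restrict (Set.Ioc (0:ℝ) 1))).toReal)^2 := by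
      intro m
      rw [intervalIntegral.integral_of_le zero_le_one]
      rw [toReal_eLpNorm_two
        ((concat_memℒp (hTN0 m) (hubNm m) (hvbNm m)).sub (concat_memℒp hT hub hvb))]
      refine setIntegral_congr_fun measurableSet_Ioc fun t ht => ?_
      have h1 := concat_indicator_eq (u := uN m) (v := vN m) (T := TN m) (hTN0 m)
        (Set.Ioc_subset_Icc_self ht)
      have h2 := concat_indicator_eq (u := u) (v := v) (T := T) hT
        (Set.Ioc_subset_Icc_self ht)
      simp only [Pi.sub_apply, h1, h2]
    rw [show (fun m => ∫ t in (0:ℝ)..1,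
        (concatRescale (uN m) (vN m) (TN m) t - concatRescale u v T t)^2)
      = fun m => ((eLpNorm (concatRescale (Set.indicator (Set.Icc (0:ℝ) 1) (uN m))
              (Set.indicator (Set.Ici (0:ℝ)) (vN m)) (TN m)
            - concatRescale (Set.indicator (Set.Icc (0:ℝ) 1) u)
              (Set.indicator (Set.Ici (0:ℝ)) v) T) 2
            (volume.restrict (Set.Ioc (0:ℝ) 1))).toReal)^2 from funext hgoal_eq]
    suffices hD : Tendsto (fun m => (eLpNorm (concatRescale
          (Set.indicator (Set.Icc (0:ℝ) 1) (uN m))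
          (Set.indicator (Set.Ici (0:ℝ)) (vN m)) (TN m)
        - concatRescale (Set.indicator (Set.Icc (0:ℝ) 1) u)
          (Set.indicator (Set.Ici (0:ℝ)) v) T) 2
        (volume.restrict (Set.Ioc (0:ℝ) 1))).toReal) atTop (𝓝 0) by
      simpa using hD.pow 2
    -- decomposition into dilation part and linear part
    have hdec : ∀ m, (concatRescale (Set.indicator (Set.Icc (0:ℝ) 1) (uN m))
          (Set.indicator (Set.Ici (0:ℝ)) (vN m)) (TN m)
        - concatRescale (Set.indicator (Set.Icc (0:ℝ) 1) u)
          (Set.indicator (Set.Ici (0:ℝ)) v) T)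
        = concatRescale (Set.indicator (Set.Icc (0:ℝ) 1) (uN m)
              - Set.indicator (Set.Icc (0:ℝ) 1) u)
            (Set.indicator (Set.Ici (0:ℝ)) (vN m) - Set.indicator (Set.Ici (0:ℝ)) v) (TN m)
          + (concatRescale (Set.indicator (Set.Icc (0:ℝ) 1) u)
              (Set.indicator (Set.Ici (0:ℝ)) v) (TN m)
            - concatRescale (Set.indicator (Set.Icc (0:ℝ) 1) u)
              (Set.indicator (Set.Ici (0:ℝ)) v) T) := by
      intro m; funext t
      have e1 := concat_sub_apply (Set.indicator (Set.Icc (0:ℝ) 1) (uN m))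
        (Set.indicator (Set.Icc (0:ℝ) 1) u) (Set.indicator (Set.Ici (0:ℝ)) (vN m))
        (Set.indicator (Set.Ici (0:ℝ)) v) (TN m) t
      simp only [Pi.add_apply, Pi.sub_apply] at *
      linarith
    have hXmem : ∀ m, MemLp (concatRescale
        (Set.indicator (Set.Icc (0:ℝ) 1) (uN m) - Set.indicator (Set.Icc (0:ℝ) 1) u)
        (Set.indicator (Set.Ici (0:ℝ)) (vN m) - Set.indicator (Set.Ici (0:ℝ)) v) (TN m)) 2
        (volume.restrict (Set.Ioc (0:ℝ) 1)) :=
      fun m => concat_memℒp (hTN0 m) ((hubNm m).sub hub) ((hvbNm m).sub hvb)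
    have hYmem : ∀ m, MemLp (concatRescale (Set.indicator (Set.Icc (0:ℝ) 1) u)
          (Set.indicator (Set.Ici (0:ℝ)) v) (TN m)
        - concatRescale (Set.indicator (Set.Icc (0:ℝ) 1) u)
          (Set.indicator (Set.Ici (0:ℝ)) v) T) 2 (volume.restrict (Set.Ioc (0:ℝ) 1)) :=
      fun m => (concat_memℒp (hTN0 m) hub hvb).sub (concat_memℒp hT hub hvb)
    have htri : ∀ m, (eLpNorm (concatRescale (Set.indicator (Set.Icc (0:ℝ) 1) (uN m))
          (Set.indicator (Set.Ici (0:ℝ)) (vN m)) (TN m)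
        - concatRescale (Set.indicator (Set.Icc (0:ℝ) 1) u)
          (Set.indicator (Set.Ici (0:ℝ)) v) T) 2
        (volume.restrict (Set.Ioc (0:ℝ) 1))).toReal
        ≤ (eLpNorm (concatRescale
            (Set.indicator (Set.Icc (0:ℝ) 1) (uN m) - Set.indicator (Set.Icc (0:ℝ) 1) u)
            (Set.indicator (Set.Ici (0:ℝ)) (vN m) - Set.indicator (Set.Ici (0:ℝ)) v)
            (TN m)) 2 (volume.restrict (Set.Ioc (0:ℝ) 1))).toReal
          + (eLpNorm (concatRescale (Set.indicator (Set.Icc (0:ℝ) 1) u)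
              (Set.indicator (Set.Ici (0:ℝ)) v) (TN m)
            - concatRescale (Set.indicator (Set.Icc (0:ℝ) 1) u)
              (Set.indicator (Set.Ici (0:ℝ)) v) T) 2
            (volume.restrict (Set.Ioc (0:ℝ) 1))).toReal := by
      intro m
      have := toReal_eLpNorm_add_le (hXmem m) (hYmem m)
      rw [← hdec m] at this
      exact this
    have hY := concat_dilation_toReal_tendsto hub hvb hT hTN0 hTlim
    -- the linear part
    have haN : ∀ m, ((eLpNorm (Set.indicator (Set.Icc (0:ℝ) 1) (uN m)
          - Set.indicator (Set.Icc (0:ℝ) 1) u) 2 (volume : Measure ℝ)).toReal)^2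
        = ∫ t in (0:ℝ)..1, (uN m t - u t)^2 := by
      intro m
      rw [toReal_eLpNorm_two ((hubNm m).sub hub)]
      have hind : (fun x => ((Set.indicator (Set.Icc (0:ℝ) 1) (uN m)
            - Set.indicator (Set.Icc (0:ℝ) 1) u) x)^2)
          = Set.indicator (Set.Icc (0:ℝ) 1) (fun x => (uN m x - u x)^2) := by
        funext x
        by_cases hx : x ∈ Set.Icc (0:ℝ) 1
        · simp [Set.indicator_of_mem hx]
        · simp [Set.indicator_of_notMem hx]
      calc ∫ x, ((Set.indicator (Set.Icc (0:ℝ) 1) (uN m)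
              - Set.indicator (Set.Icc (0:ℝ) 1) u) x)^2
            = ∫ x, Set.indicator (Set.Icc (0:ℝ) 1) (fun x => (uN m x - u x)^2) x := by
              rw [hind]
        _ = ∫ x in Set.Icc (0:ℝ) 1, (uN m x - u x)^2 := integral_indicator measurableSet_Icc
        _ = ∫ x in Set.Ioc (0:ℝ) 1, (uN m x - u x)^2 := integral_Icc_eq_integral_Ioc
        _ = ∫ t in (0:ℝ)..1, (uN m t - u t)^2 :=
              (intervalIntegral.integral_of_le zero_le_one).symm
    have hbN : ∀ m, ((eLpNorm (Set.indicator (Set.Ici (0:ℝ)) (vN m)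
          - Set.indicator (Set.Ici (0:ℝ)) v) 2 (volume : Measure ℝ)).toReal)^2
        = ∫ t in Set.Ici (0:ℝ), (vN m t - v t)^2 := by
      intro m
      rw [toReal_eLpNorm_two ((hvbNm m).sub hvb)]
      have hind : (fun x => ((Set.indicator (Set.Ici (0:ℝ)) (vN m)
            - Set.indicator (Set.Ici (0:ℝ)) v) x)^2)
          = Set.indicator (Set.Ici (0:ℝ)) (fun x => (vN m x - v x)^2) := by
        funext x
        by_cases hx : x ∈ Set.Ici (0:ℝ)
        · simp [Set.indicator_of_mem hx]
        · simp [Set.indicator_of_notMem hx]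
      calc ∫ x, ((Set.indicator (Set.Ici (0:ℝ)) (vN m)
              - Set.indicator (Set.Ici (0:ℝ)) v) x)^2
            = ∫ x, Set.indicator (Set.Ici (0:ℝ)) (fun x => (vN m x - v x)^2) x := by
              rw [hind]
        _ = ∫ x in Set.Ici (0:ℝ), (vN m x - v x)^2 := integral_indicator measurableSet_Ici
    have hXle : ∀ m, (eLpNorm (concatRescale
          (Set.indicator (Set.Icc (0:ℝ) 1) (uN m) - Set.indicator (Set.Icc (0:ℝ) 1) u)
          (Set.indicator (Set.Ici (0:ℝ)) (vN m) - Set.indicator (Set.Ici (0:ℝ)) v)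
          (TN m)) 2 (volume.restrict (Set.Ioc (0:ℝ) 1))).toReal
        ≤ Real.sqrt ((TN m + 1) * ((∫ t in (0:ℝ)..1, (uN m t - u t)^2)
            + ∫ t in Set.Ici (0:ℝ), (vN m t - v t)^2)) := by
      intro m
      have hb := concat_toReal_le (hTN0 m) ((hubNm m).sub hub) ((hvbNm m).sub hvb)
      rwa [haN m, hbN m] at hb
    have hW : Tendsto (fun m => Real.sqrt ((TN m + 1) * ((∫ t in (0:ℝ)..1, (uN m t - u t)^2)
        + ∫ t in Set.Ici (0:ℝ), (vN m t - v t)^2))) atTop (𝓝 0) := by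
      have h1 : Tendsto (fun m => (TN m + 1) * ((∫ t in (0:ℝ)..1, (uN m t - u t)^2)
          + ∫ t in Set.Ici (0:ℝ), (vN m t - v t)^2)) atTop (𝓝 ((T + 1) * (0 + 0))) :=
        (hTlim.add_const 1).mul (hAu.add hAv)
      have h2 := h1.sqrt
      simpa using h2
    have hX : Tendsto (fun m => (eLpNorm (concatRescale
          (Set.indicator (Set.Icc (0:ℝ) 1) (uN m) - Set.indicator (Set.Icc (0:ℝ) 1) u)
          (Set.indicator (Set.Ici (0:ℝ)) (vN m) - Set.indicator (Set.Ici (0:ℝ)) v)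
          (TN m)) 2 (volume.restrict (Set.Ioc (0:ℝ) 1))).toReal) atTop (𝓝 0) :=
      squeeze_zero (fun m => ENNReal.toReal_nonneg) hXle hW
    refine squeeze_zero (fun m => ENNReal.toReal_nonneg) htri ?_
    simpa using hX.add hY
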